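/- arXiv:2008.08955 — 3 statements merged into one kernel-verified Lean document; each statement's English description precedes it below -/
import Mathlib

section
/- Let λ : {0,1}^L → {0,1}^l be a linear hash function with λ(e^L_{L-1}) = λ(1^{d-1}0^{L-d+1}). With Z, U, V as defined, λ(U) = λ(V) as sets, and |λ(B^{L-1}_{d-2})| ≤ |B^{L-1}_{d-2}| − |U|. -/
/-- Hamming weight of a binary word. -/
def hamWt {L : ℕ} (x : Fin L → ZMod 2) : ℕ :=
  (Finset.univ.filter fun i => x i ≠ 0).card

/-- Weight of the `x`-part: the first `d-1` coordinates. -/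
def wtX (L d : ℕ) (z : Fin L → ZMod 2) : ℕ :=
  (Finset.univ.filter fun i : Fin L => z i ≠ 0 ∧ i.val < d - 1).card

/-- Weight of the `y`-part: coordinates `d, …, L-2` (1-indexed), i.e. the
`L-d-1` coordinates between the `x`-part and the last two coordinates. -/
def wtY (L d : ℕ) (z : Fin L → ZMod 2) : ℕ :=
  (Finset.univ.filter fun i : Fin L => z i ≠ 0 ∧ d - 1 ≤ i.val ∧ i.val < L - 2).card

/-- The set `Z` of words of the form `x y 0 0` with `|x| = d-1`,
`|y| = L-d-1`, `‖x‖ + ‖y‖ ≤ d-3` and `‖y‖ ≤ ‖x‖ - 1`. -/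
def Zset (L d : ℕ) : Set (Fin L → ZMod 2) :=
  {z | (∀ i : Fin L, L - 2 ≤ i.val → z i = 0) ∧
    wtX L d z + wtY L d z ≤ d - 3 ∧ wtY L d z + 1 ≤ wtX L d z}

/-- `e^L_{L-1}`: the word with a single 1 in position `L-1` (1-indexed). -/
def eLm1 (L : ℕ) : Fin L → ZMod 2 :=
  fun j => if j.val = L - 2 then 1 else 0

/-- `1^{d-1} 0^{L-d+1}`: ones in the first `d-1` positions. -/
def onesW (L d : ℕ) : Fin L → ZMod 2 :=
  fun j => if j.val < d - 1 then 1 else 0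

/-- `U = { e^L_{L-1} ⊕ z : z ∈ Z }`. -/
def Uset (L d : ℕ) : Set (Fin L → ZMod 2) := Set.image (fun z => eLm1 L + z) (Zset L d)

/-- `V = { 1^{d-1}0^{L-d+1} ⊕ z : z ∈ Z }`. -/
def Vset (L d : ℕ) : Set (Fin L → ZMod 2) := Set.image (fun z => onesW L d + z) (Zset L d)

private lemma zmod2_ne_zero {a : ZMod 2} (h : a ≠ 0) : a = 1 := by
  revert h; revert a; decide

/-- An element of `U` has weight at most `d-2`. -/
private lemma wtU_le {L d : ℕ} (hd : 4 ≤ d) (hdL : d < L) {z : Fin L → ZMod 2}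
    (hz : z ∈ Zset L d) : hamWt (eLm1 L + z) ≤ d - 2 := by
  obtain ⟨h0, hs, _⟩ := hz
  have hsub : (Finset.univ.filter fun i : Fin L => (eLm1 L + z) i ≠ 0) ⊆
      insert ⟨L - 2, by omega⟩
        ((Finset.univ.filter fun i : Fin L => z i ≠ 0 ∧ i.val < d - 1) ∪
         (Finset.univ.filter fun i : Fin L => z i ≠ 0 ∧ d - 1 ≤ i.val ∧ i.val < L - 2)) := by
    intro i hi
    simp only [Finset.mem_filter, Finset.mem_univ, true_and, Pi.add_apply] at hi
    simp only [Finset.mem_insert, Finset.mem_union, Finset.mem_filter, Finset.mem_univ,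
      true_and]
    by_cases hiv : i.val = L - 2
    · exact Or.inl (Fin.ext hiv)
    · right
      have he : eLm1 L i = 0 := by simp [eLm1, hiv]
      rw [he, zero_add] at hi
      have hlt : i.val < L - 2 := by
        by_contra h
        exact hi (h0 i (by omega))
      rcases lt_or_ge i.val (d - 1) with h | h
      · exact Or.inl ⟨hi, h⟩
      · exact Or.inr ⟨hi, h, hlt⟩
  have h1 : hamWt (eLm1 L + z) ≤ 1 + (wtX L d z + wtY L d z) := by
    calc hamWt (eLm1 L + z) ≤ _ := Finset.card_le_card hsub
      _ ≤ _ + 1 := Finset.card_insert_le _ _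
      _ ≤ 1 + (wtX L d z + wtY L d z) := by
        have := Finset.card_union_le
          (Finset.univ.filter fun i : Fin L => z i ≠ 0 ∧ i.val < d - 1)
          (Finset.univ.filter fun i : Fin L => z i ≠ 0 ∧ d - 1 ≤ i.val ∧ i.val < L - 2)
        unfold wtX wtY
        omega
  omega

/-- An element of `V` has weight at most `d-2`. -/
private lemma wtV_le {L d : ℕ} (hd : 4 ≤ d) (hdL : d < L) {z : Fin L → ZMod 2}
    (hz : z ∈ Zset L d) : hamWt (onesW L d + z) ≤ d - 2 := by
  obtain ⟨h0, hs, hy⟩ := hz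
  set A := Finset.univ.filter (fun i : Fin L => i.val < d - 1 ∧ z i = 0) with hA
  have hsub : (Finset.univ.filter fun i : Fin L => (onesW L d + z) i ≠ 0) ⊆
      A ∪ (Finset.univ.filter fun i : Fin L => z i ≠ 0 ∧ d - 1 ≤ i.val ∧ i.val < L - 2) := by
    intro i hi
    simp only [Finset.mem_filter, Finset.mem_univ, true_and, Pi.add_apply] at hi
    simp only [hA, Finset.mem_union, Finset.mem_filter, Finset.mem_univ, true_and]
    rcases lt_or_ge i.val (d - 1) with h | h
    · left
      refine ⟨h, ?_⟩
      by_contra hzi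
      have hw : onesW L d i = 1 := by simp [onesW, h]
      rw [hw, zmod2_ne_zero hzi] at hi
      exact hi (by decide)
    · right
      have hw : onesW L d i = 0 := by simp [onesW]; omega
      rw [hw, zero_add] at hi
      have hlt : i.val < L - 2 := by
        by_contra hcon
        exact hi (h0 i (by omega))
      exact ⟨hi, h, hlt⟩
  -- `A` and the `x`-part filter are disjoint inside `{i | i.val < d-1}`
  have hdisj : Disjoint A (Finset.univ.filter fun i : Fin L => z i ≠ 0 ∧ i.val < d - 1) := by
    rw [Finset.disjoint_left]
    intro i hiA hiX
    simp only [hA, Finset.mem_filter, Finset.mem_univ, true_and] at hiA hiX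
    exact hiX.1 hiA.2
  have hcard : A.card + wtX L d z ≤ d - 1 := by
    have hun : (A ∪ Finset.univ.filter fun i : Fin L => z i ≠ 0 ∧ i.val < d - 1).card
        = A.card + wtX L d z := by
      rw [Finset.card_union_of_disjoint hdisj]; rfl
    rw [← hun]
    have hmap : ∀ i ∈ (A ∪ Finset.univ.filter fun i : Fin L => z i ≠ 0 ∧ i.val < d - 1),
        i.val ∈ Finset.range (d - 1) := by
      intro i hi
      simp only [hA, Finset.mem_union, Finset.mem_filter, Finset.mem_univ, true_and] at hi
      simp only [Finset.mem_range]
      rcases hi with h | h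
      · exact h.1
      · exact h.2
    calc (A ∪ Finset.univ.filter fun i : Fin L => z i ≠ 0 ∧ i.val < d - 1).card
        ≤ (Finset.range (d - 1)).card :=
          Finset.card_le_card_of_injOn _ hmap (Fin.val_injective.injOn)
      _ = d - 1 := Finset.card_range _
  have h1 : hamWt (onesW L d + z) ≤ A.card + wtY L d z := by
    calc hamWt (onesW L d + z) ≤ _ := Finset.card_le_card hsub
      _ ≤ A.card + wtY L d z := Finset.card_union_le _ _
  omega

/-- Elements of `U` and `V` vanish on the last two coordinates. -/
private lemma lastU {L d : ℕ} (hd : 4 ≤ d) (hdL : d < L) {z : Fin L → ZMod 2}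
    (hz : z ∈ Zset L d) {i : Fin L} (hi : i.val = L - 1) : (eLm1 L + z) i = 0 := by
  obtain ⟨h0, _, _⟩ := hz
  have he : eLm1 L i = 0 := by simp [eLm1]; omega
  have hzi : z i = 0 := h0 i (by omega)
  simp [he, hzi]

private lemma lastV {L d : ℕ} (hd : 4 ≤ d) (hdL : d < L) {z : Fin L → ZMod 2}
    (hz : z ∈ Zset L d) {i : Fin L} (hi : i.val = L - 1) : (onesW L d + z) i = 0 := by
  obtain ⟨h0, _, _⟩ := hz
  have he : onesW L d i = 0 := by simp [onesW]; omega
  have hzi : z i = 0 := h0 i (by omega)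
  simp [he, hzi]

/-- `U` and `V` are disjoint: they differ at coordinate `L-2`. -/
private lemma UV_disjoint {L d : ℕ} (hd : 4 ≤ d) (hdL : d < L) :
    ∀ v ∈ Vset L d, v ∉ Uset L d := by
  rintro v ⟨z', hz', rfl⟩ ⟨z, hz, heq⟩
  have hfun := congrFun heq ⟨L - 2, by omega⟩
  simp only [Pi.add_apply] at hfun
  have h1 : eLm1 L (⟨L - 2, by omega⟩ : Fin L) = 1 := by simp [eLm1]
  have h2 : onesW L d (⟨L - 2, by omega⟩ : Fin L) = 0 := by simp [onesW]; omega
  have h3 : z (⟨L - 2, by omega⟩ : Fin L) = 0 := hz.1 _ (le_refl _)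
  have h4 : z' (⟨L - 2, by omega⟩ : Fin L) = 0 := hz'.1 _ (le_refl _)
  rw [h1, h2, h3, h4] at hfun
  exact (by decide : ¬((1 : ZMod 2) + 0 = 0 + 0)) hfun

/-- if `f` is linear and `f (e^L_{L-1}) = f (1^{d-1}0^{L-d+1})`,
then `f(U) = f(V)` and `|f(B^{L-1}_{d-2})| ≤ |B^{L-1}_{d-2}| - |U|`, where
`B^{L-1}_{d-2}` is the set of words of weight at most `d-2` with last
coordinate `0`. -/
theorem stmt13 {L d l : ℕ} (hd : 4 ≤ d) (hdL : d < L)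
    (f : (Fin L → ZMod 2) → (Fin l → ZMod 2))
    (hlin : ∀ x y, f (x + y) = f x + f y)
    (hval : f (eLm1 L) = f (onesW L d)) :
    f '' Uset L d = f '' Vset L d ∧
      Nat.card (f '' {x : Fin L → ZMod 2 |
          hamWt x ≤ d - 2 ∧ x ⟨L - 1, by omega⟩ = 0}) ≤
        Nat.card {x : Fin L → ZMod 2 |
          hamWt x ≤ d - 2 ∧ x ⟨L - 1, by omega⟩ = 0} - Nat.card (Uset L d) := by
  have himg : ∀ z ∈ Zset L d, f (eLm1 L + z) = f (onesW L d + z) := by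
    intro z _
    rw [hlin, hlin, hval]
  have h1 : f '' Uset L d = f '' Vset L d := by
    unfold Uset Vset
    rw [Set.image_image, Set.image_image]
    exact Set.image_congr himg
  refine ⟨h1, ?_⟩
  set B : Set (Fin L → ZMod 2) :=
    {x : Fin L → ZMod 2 | hamWt x ≤ d - 2 ∧ x ⟨L - 1, by omega⟩ = 0} with hB
  have hUB : Uset L d ⊆ B := by
    rintro u ⟨z, hz, rfl⟩
    exact ⟨wtU_le hd hdL hz, lastU hd hdL hz rfl⟩
  have hVB : Vset L d ⊆ B := by
    rintro v ⟨z, hz, rfl⟩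
    exact ⟨wtV_le hd hdL hz, lastV hd hdL hz rfl⟩
  have hBU : f '' B = f '' (B \ Uset L d) := by
    apply Set.Subset.antisymm
    · rintro y ⟨b, hb, rfl⟩
      by_cases hbU : b ∈ Uset L d
      · obtain ⟨z, hz, rfl⟩ := hbU
        refine ⟨onesW L d + z, ⟨hVB ⟨z, hz, rfl⟩, ?_⟩, (himg z hz).symm⟩
        exact UV_disjoint hd hdL _ ⟨z, hz, rfl⟩
      · exact ⟨b, ⟨hb, hbU⟩, rfl⟩
    · exact Set.image_mono (f := f) (Set.diff_subset)
  calc Nat.card (f '' B) = (f '' (B \ Uset L d)).ncard := by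
        rw [Nat.card_coe_set_eq, hBU]
    _ ≤ (B \ Uset L d).ncard := Set.ncard_image_le (Set.toFinite _)
    _ = B.ncard - (Uset L d).ncard := Set.ncard_diff hUB (Set.toFinite _)
    _ = Nat.card B - Nat.card (Uset L d) := by
        rw [Nat.card_coe_set_eq, Nat.card_coe_set_eq]
end

section
/- Let D ⊆ {0,1}^L \ {0} and let λ : {0,1}^L → {0,1}^l be a linear map satisfying: λ(e^L_i) = e^l_i for i = 1,...,l, and for each i = l+1,...,L, λ(e^L_i) ∉ λ(D'_i), where D'_i = {d ⊕ e^L_i : d ∈ D, d_i = 1, d_{i+1} = ... = d_L = 0}. Then λ(d) ≠ 0 for every d ∈ D. -/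
/-- `D'_i = { d ⊕ e^L_i : d ∈ D, d_i = 1, d_j = 0 for j > i }`. -/
def Dres {L : ℕ} (D : Set (Fin L → ZMod 2)) (i : Fin L) : Set (Fin L → ZMod 2) :=
  {w | ∃ d ∈ D, d i = 1 ∧ (∀ j : Fin L, i < j → d j = 0) ∧
    w = d + fun j : Fin L => if j = i then 1 else 0}

/-- let `D ⊆ {0,1}^L \ {0}` and `f` be a linear map with
`f (e^L_i) = e^l_i` for `i = 1,…,l`, and `f (e^L_i) ∉ f(D'_i)` for
`i = l+1,…,L`. Then `f d ≠ 0` for every `d ∈ D`. -/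
theorem stmt15 {L l : ℕ} (hl : l < L)
    (D : Set (Fin L → ZMod 2)) (hD0 : (0 : Fin L → ZMod 2) ∉ D)
    (f : (Fin L → ZMod 2) → (Fin l → ZMod 2))
    (hlin : ∀ x y, f (x + y) = f x + f y)
    (hbase : ∀ i : Fin l,
      f (fun j : Fin L => if j.val = i.val then 1 else 0) =
        fun j : Fin l => if j = i then 1 else 0)
    (hchoice : ∀ i : Fin L, l ≤ i.val →
      f (fun j : Fin L => if j = i then 1 else 0) ∉ f '' Dres D i) :
    ∀ d ∈ D, f d ≠ 0 := by
  intro d hd hfd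
  have hz : ∀ a : ZMod 2, a = 0 ∨ a = 1 := by decide
  have hdne : d ≠ 0 := fun h => hD0 (h ▸ hd)
  set S : Finset (Fin L) := Finset.univ.filter (fun j => d j = 1) with hS
  have hSne : S.Nonempty := by
    obtain ⟨j, hj⟩ := Function.ne_iff.mp hdne
    rcases hz (d j) with h | h
    · exact absurd h hj
    · exact ⟨j, by simp [hS, h]⟩
  set i : Fin L := S.max' hSne with hi
  have hdi : d i = 1 := by
    have := S.max'_mem hSne
    simpa [hS] using this
  have htop : ∀ j : Fin L, i < j → d j = 0 := by
    intro j hij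
    rcases hz (d j) with h | h
    · exact h
    · exact absurd (S.le_max' j (by simp [hS, h])) (not_le.mpr hij)
  have hf0 : f 0 = 0 := by
    have h := hlin 0 0
    rw [add_zero] at h
    exact left_eq_add.mp h
  rcases Nat.lt_or_ge i.val l with hil | hil
  · -- i < l : coordinate i of f d is 1
    have F : (Fin L → ZMod 2) →+ (Fin l → ZMod 2) := AddMonoidHom.mk' f hlin
    have hdsum : d = ∑ j : Fin L, Pi.single j (d j) := (Finset.univ_sum_single d).symm
    have hsum : f d = ∑ j : Fin L, f (Pi.single j (d j)) := by
      conv_lhs => rw [hdsum]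
      exact map_sum (AddMonoidHom.mk' f hlin) _ _
    have hone : (f d) ⟨i.val, hil⟩ = 1 := by
      rw [hsum, Finset.sum_apply]
      rw [Finset.sum_eq_single_of_mem i (Finset.mem_univ i)]
      · rw [hdi]
        have hb := hbase ⟨i.val, hil⟩
        have heq : (Pi.single i 1 : Fin L → ZMod 2) =
            fun j : Fin L => if j.val = (⟨i.val, hil⟩ : Fin l).val then 1 else 0 := by
          funext k
          simp [Pi.single_apply, Fin.ext_iff]
        rw [heq, hb]
        simp
      · intro j _ hji
        rcases hz (d j) with h | h
        · rw [h]
          simp [hf0]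
        · have hjS : j ∈ S := by simp [hS, h]
          have hjl : j.val < l := lt_of_le_of_lt (S.le_max' j hjS) hil
          rw [h]
          have hb := hbase ⟨j.val, hjl⟩
          have heq : (Pi.single j 1 : Fin L → ZMod 2) =
              fun k : Fin L => if k.val = (⟨j.val, hjl⟩ : Fin l).val then 1 else 0 := by
            funext k
            simp [Pi.single_apply, Fin.ext_iff]
          rw [heq, hb]
          simp only
          rw [if_neg]
          simp [Fin.ext_iff]
          exact fun h' => hji (Fin.ext h'.symm)
    rw [hfd] at hone
    simp at hone
  · -- i ≥ l : contradiction with hchoice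
    refine hchoice i hil ⟨d + (fun j : Fin L => if j = i then 1 else 0),
      ⟨d, hd, hdi, htop, rfl⟩, ?_⟩
    rw [hlin, hfd, zero_add]
end

section
/- Let D ⊆ {0,1}^L \ {0}, D⁺ = D ∪ {0}, and for x = x_1...x_L let x|_1^i = x_1...x_i 0...0 (zeroing coordinates after i). Define G_i = {d|_1^i : d ∈ D⁺}, H_i = G_i \ G_{i-1}, and F_i = {g ⊕ h ⊕ e^L_i : g ∈ G_{i-1}, h ∈ H_i}. Let λ : {0,1}^L → {0,1}^l be a linear map with λ(e^L_i) = e^l_i for i ≤ l and λ(e^L_i) ∉ λ(F_i) for i = l+1,...,L. Then all values λ(u), u ∈ D⁺, are pairwise distinct; in particular λ(d) ≠ 0 for all d ∈ D. -/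
/-- `x|_1^i`: keep the first `i` coordinates (1-indexed positions `1,…,i`),
zero out the rest. -/
def restr {L : ℕ} (i : ℕ) (x : Fin L → ZMod 2) : Fin L → ZMod 2 :=
  fun j => if j.val < i then x j else 0

/-- The word of length `L` with a single 1 at (0-indexed) coordinate `k`. -/
def eN (L k : ℕ) : Fin L → ZMod 2 :=
  fun j => if j.val = k then 1 else 0

/-- `G_i = { d|_1^i : d ∈ D⁺ }` where `D⁺ = D ∪ {0}`. -/
def Gset {L : ℕ} (D : Set (Fin L → ZMod 2)) (i : ℕ) : Set (Fin L → ZMod 2) :=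
  restr i '' (D ∪ {0})

/-- `H_i = G_i \ G_{i-1}`. -/
def Hset {L : ℕ} (D : Set (Fin L → ZMod 2)) (i : ℕ) : Set (Fin L → ZMod 2) :=
  Gset D i \ Gset D (i - 1)

/-- `F_i = { g ⊕ h ⊕ e^L_i : g ∈ G_{i-1}, h ∈ H_i }` (position `i` is
0-indexed coordinate `i-1`). -/
def Fset {L : ℕ} (D : Set (Fin L → ZMod 2)) (i : ℕ) : Set (Fin L → ZMod 2) :=
  {w | ∃ g ∈ Gset D (i - 1), ∃ h ∈ Hset D i, w = g + h + eN L (i - 1)}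

lemma Gset_coords {L : ℕ} {D : Set (Fin L → ZMod 2)} {n : ℕ} {x : Fin L → ZMod 2}
    (hx : x ∈ Gset D n) : ∀ j : Fin L, n ≤ j.val → x j = 0 := by
  obtain ⟨d, -, rfl⟩ := hx
  intro j hj
  simp [restr, Nat.not_lt.mpr hj]

lemma restr_restr {L : ℕ} {a b : ℕ} (hab : a ≤ b) (x : Fin L → ZMod 2) :
    restr a (restr b x) = restr a x := by
  funext j
  by_cases h : j.val < a
  · simp [restr, h, lt_of_lt_of_le h hab]
  · simp [restr, h]

/-- let `D ⊆ {0,1}^L \ {0}` and let `f` be linear with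
`f (e^L_i) = e^l_i` for `i ≤ l` and `f (e^L_i) ∉ f(F_i)` for `i = l+1,…,L`.
Then `f` is injective on `D⁺ = D ∪ {0}`; in particular `f d ≠ 0` for all
`d ∈ D`. -/
theorem stmt17 {L l : ℕ} (hl : l ≤ L)
    (D : Set (Fin L → ZMod 2)) (hD0 : (0 : Fin L → ZMod 2) ∉ D)
    (f : (Fin L → ZMod 2) → (Fin l → ZMod 2))
    (hlin : ∀ x y, f (x + y) = f x + f y)
    (hbase : ∀ i : Fin l, f (eN L i.val) = fun j : Fin l => if j = i then 1 else 0)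
    (hchoice : ∀ i : ℕ, l < i → i ≤ L → f (eN L (i - 1)) ∉ f '' Fset D i) :
    Set.InjOn f (D ∪ {0}) ∧ ∀ d ∈ D, f d ≠ 0 := by
  classical
  have z2 : ∀ a : ZMod 2, a = 0 ∨ a = 1 := by decide
  have hf0 : f 0 = 0 := by
    have h := hlin 0 0
    rw [add_zero] at h
    exact (left_eq_add.mp h)
  have hcancel : ∀ x y, f x = f y → f x + f y = 0 := by
    intro x y h
    rw [h]
    funext k
    exact CharTwo.add_self_eq_zero _
  have f_sum : ∀ (s : Finset (Fin L)) (g : Fin L → (Fin L → ZMod 2)),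
      f (∑ j ∈ s, g j) = ∑ j ∈ s, f (g j) := by
    intro s g
    induction s using Finset.induction_on with
    | empty => simpa using hf0
    | insert _ _ hj ih => rw [Finset.sum_insert hj, Finset.sum_insert hj, hlin, ih]
  have f_smul : ∀ (c : ZMod 2) (v : Fin L → ZMod 2), f (c • v) = c • f v := by
    intro c v
    rcases z2 c with rfl | rfl
    · simp [hf0]
    · simp
  have hdecomp : ∀ x : Fin L → ZMod 2, x = ∑ j : Fin L, x j • eN L j.val := by
    intro x
    funext k
    rw [Finset.sum_apply]
    have hterm : ∀ j : Fin L, (x j • eN L j.val) k = if k = j then x j else 0 := by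
      intro j
      by_cases h : k = j
      · subst h; simp [eN]
      · have : k.val ≠ j.val := fun hv => h (Fin.ext hv)
        simp [eN, this, h]
    simp_rw [hterm]
    simp
  have heval : ∀ x : Fin L → ZMod 2, (∀ j : Fin L, l ≤ j.val → x j = 0) →
      ∀ k : Fin l, f x k = x ⟨k.val, lt_of_lt_of_le k.isLt hl⟩ := by
    intro x hx k
    conv_lhs => rw [hdecomp x]
    rw [f_sum, Finset.sum_apply]
    rw [Finset.sum_eq_single (⟨k.val, lt_of_lt_of_le k.isLt hl⟩ : Fin L)]
    · have hb := hbase k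
      simp [f_smul, hb]
    · intro j _ hj
      by_cases hjl : j.val < l
      · have hb := hbase ⟨j.val, hjl⟩
        have hkne : k ≠ ⟨j.val, hjl⟩ := by
          intro hk
          apply hj
          ext
          simp [hk]
        simp only [f_smul, Pi.smul_apply, smul_eq_mul]
        rw [show (eN L j.val) = eN L ((⟨j.val, hjl⟩ : Fin l)).val from rfl, hb]
        simp [hkne]
      · rw [hx j (le_of_not_gt hjl)]
        simp [hf0]
    · simp
  have key : ∀ i, l ≤ i → i ≤ L → Set.InjOn f (Gset D i) := by
    intro i hi
    induction i, hi using Nat.le_induction with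
    | base =>
      intro _ x hx y hy hfxy
      funext j
      by_cases hj : j.val < l
      · have h1 := heval x (Gset_coords hx) ⟨j.val, hj⟩
        have h2 := heval y (Gset_coords hy) ⟨j.val, hj⟩
        rw [hfxy] at h1
        exact h1.symm.trans h2
      · rw [Gset_coords hx j (le_of_not_gt hj), Gset_coords hy j (le_of_not_gt hj)]
    | succ i hi ih =>
      intro hiL
      have hIH := ih (by omega)
      have hpi : i < L := by omega
      set p : Fin L := ⟨i, hpi⟩ with hp
      -- elements of G_{i+1} \ G_i have coordinate p equal to 1, and adding eN L i lands in G_i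
      have hH : ∀ x, x ∈ Gset D (i+1) → x ∉ Gset D i → x + eN L i ∈ Gset D i := by
        intro x hx hxn
        have hxp : x p = 1 := by
          rcases z2 (x p) with h0 | h1
          · exfalso
            apply hxn
            obtain ⟨d, hd, rfl⟩ := hx
            refine ⟨d, hd, ?_⟩
            funext j
            by_cases hji : j.val < i
            · simp [restr, hji, Nat.lt_succ_of_lt hji]
            · by_cases hje : j.val = i
              · have hjp : j = p := Fin.ext hje
                rw [hjp]
                simp only [restr] at h0 ⊢
                simp only [hp] at h0 ⊢
                simpa [hje] using h0.symm
              · have : ¬ j.val < i + 1 := by omega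
                simp [restr, hji, this]
          · exact h1
        have hrx : restr i x ∈ Gset D i := by
          obtain ⟨d, hd, rfl⟩ := hx
          exact ⟨d, hd, (restr_restr (Nat.le_succ i) d).symm⟩
        have hEq : x + eN L i = restr i x := by
          funext j
          by_cases hji : j.val < i
          · have : j.val ≠ i := by omega
            simp [restr, eN, hji, this]
          · by_cases hje : j.val = i
            · have hjp : j = p := Fin.ext hje
              rw [hjp]
              simp only [Pi.add_apply, eN, restr, hp]
              rw [hxp]
              norm_num
              decide
            · have h1 : ¬ j.val < i + 1 := by omega
              have := Gset_coords hx j (by omega)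
              simp [restr, eN, hji, hje, this]
        rw [hEq]
        exact hrx
      have hmix : ∀ x, x ∈ Gset D i → ∀ y, y ∈ Gset D (i+1) → y ∉ Gset D i →
          f x = f y → False := by
        intro x hx y hy1 hy2 hfxy
        apply hchoice (i+1) (by omega) hiL
        refine ⟨x + y + eN L ((i+1)-1), ?_, ?_⟩
        · refine ⟨x, ?_, y, ?_, rfl⟩
          · simpa using hx
          · refine ⟨hy1, ?_⟩
            simpa using hy2
        · simp only [Nat.add_sub_cancel]
          rw [hlin, hlin, hcancel x y hfxy, zero_add]
      intro x hx y hy hfxy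
      by_cases hxG : x ∈ Gset D i <;> by_cases hyG : y ∈ Gset D i
      · exact hIH hxG hyG hfxy
      · exact absurd hfxy (fun h => hmix x hxG y hy hyG h)
      · exact absurd hfxy.symm (fun h => hmix y hyG x hx hxG h)
      · have hx' := hH x hx hxG
        have hy' := hH y hy hyG
        have : f (x + eN L i) = f (y + eN L i) := by
          rw [hlin, hlin, hfxy]
        have := hIH hx' hy' this
        exact add_right_cancel this
  have hGL : Gset D L = D ∪ {0} := by
    have : ∀ x : Fin L → ZMod 2, restr L x = x := by
      intro x
      funext j
      simp [restr, j.isLt]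
    unfold Gset
    ext x
    constructor
    · rintro ⟨d, hd, rfl⟩
      rwa [this]
    · intro hx
      exact ⟨x, hx, this x⟩
  have hinj : Set.InjOn f (D ∪ {0}) := by
    rw [← hGL]
    exact key L hl le_rfl
  refine ⟨hinj, ?_⟩
  intro d hd hfd
  apply hD0
  have : d = 0 := hinj (Or.inl hd) (Or.inr rfl) (by rw [hfd, hf0])
  rwa [this] at hd
end
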